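/- Let Σ be a finite alphabet with at least two letters, let 𝒜 be a synchronizing automaton over Σ with n states, and let M = 𝓜(Syn(𝒜)) be its set of minimal reset words. If for some natural number ℓ with 4ℓ ≤ n² − 3n + 2 (i.e. 4ℓ ≤ (n−1)(n−2)) there exists a word x of length ℓ over Σ that is not a factor of any word of M, then 𝒜 has a reset word of length at most (n−1)² (i.e. the Černý bound holds for 𝒜). -/

import Mathlib

/-- The action of a word on a state: `actW δ q w` is `q · w`. -/
def actW {A Q : Type*} (δ : Q → A → Q) (q : Q) (w : List A) : Q := w.foldl δ q

/-- The set of reset (synchronizing) words of the automaton `(Q, δ)`. -/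
def SynSet {A Q : Type*} (δ : Q → A → Q) : Set (List A) :=
  {w | ∃ q : Q, ∀ p : Q, actW δ p w = q}

/-- `I` is a two-sided ideal of `Σ*`. -/
def IsIdealLang {A : Type*} (I : Set (List A)) : Prop :=
  ∀ x u y : List A, u ∈ I → x ++ u ++ y ∈ I

/-- The set of minimal words of an ideal: `𝓜(I) = I \ (Σ⁺I ∪ IΣ⁺)`. -/
def MinWords {A : Type*} (I : Set (List A)) : Set (List A) :=
  I \ ({w | ∃ x u : List A, x ≠ [] ∧ u ∈ I ∧ w = x ++ u} ∪
       {w | ∃ u x : List A, u ∈ I ∧ x ≠ [] ∧ w = u ++ x})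

namespace Stmt1Aux

variable {A Q : Type*}

lemma actW_append (δ : Q → A → Q) (q : Q) (u v : List A) :
    actW δ q (u ++ v) = actW δ (actW δ q u) v :=
  List.foldl_append

lemma synset_ideal (δ : Q → A → Q) : IsIdealLang (SynSet δ) := by
  rintro a u b ⟨q, hq⟩
  exact ⟨actW δ q b, fun p => by
    rw [actW_append, actW_append, hq]⟩

/-- every word of an ideal-like set has a factor that is a minimal word. -/
lemma exists_minWord_factor {I : Set (List A)} :
    ∀ (n : ℕ) (w : List A), w.length ≤ n → w ∈ I → ∃ m ∈ MinWords I, m <:+: w := by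
  intro n
  induction n with
  | zero =>
    intro w hl hw
    refine ⟨w, ⟨hw, ?_⟩, List.infix_refl w⟩
    rintro (⟨c, u, hc, hu, rfl⟩ | ⟨u, c, hu, hc, rfl⟩) <;>
      · have := List.length_pos_iff.mpr hc
        rw [List.length_append] at hl
        omega
  | succ n ih =>
    intro w hl hw
    by_cases hmem : w ∈ MinWords I
    · exact ⟨w, hmem, List.infix_refl w⟩
    · have hU : w ∈ ({w | ∃ x u : List A, x ≠ [] ∧ u ∈ I ∧ w = x ++ u} ∪
          {w | ∃ u x : List A, u ∈ I ∧ x ≠ [] ∧ w = u ++ x}) := by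
        by_contra h
        exact hmem ⟨hw, h⟩
      rcases hU with ⟨c, u, hc, hu, rfl⟩ | ⟨u, c, hu, hc, rfl⟩
      · have hlen : u.length ≤ n := by
          have := List.length_pos_iff.mpr hc
          rw [List.length_append] at hl
          omega
        obtain ⟨m, hm, hinf⟩ := ih u hlen hu
        exact ⟨m, hm, hinf.trans (List.suffix_append c u).isInfix⟩
      · have hlen : u.length ≤ n := by
          have := List.length_pos_iff.mpr hc
          rw [List.length_append] at hl
          omega
        obtain ⟨m, hm, hinf⟩ := ih u hlen hu
        exact ⟨m, hm, hinf.trans (List.prefix_append u c).isInfix⟩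

/-- The key cutting lemma: if `a ++ x ++ b` is a reset word and `x` is not a
factor of any minimal reset word, then one can cut on one side of `x`. -/
lemma cut {δ : Q → A → Q} {x : List A} (hx0 : x ≠ [])
    (hmiss : ∀ w ∈ MinWords (SynSet δ), ¬ x <:+: w)
    {a b : List A} (h : a ++ x ++ b ∈ SynSet δ) :
    a ++ x.take (x.length - 1) ∈ SynSet δ ∨ x.drop 1 ++ b ∈ SynSet δ := by
  have hx1 : 1 ≤ x.length := List.length_pos_iff.mpr hx0
  obtain ⟨m, hm, s, t, hst⟩ :=
    exists_minWord_factor (I := SynSet δ) (a ++ x ++ b).length (a ++ x ++ b) le_rfl h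
  have hmS : m ∈ SynSet δ := hm.1
  have hlen0 : s.length + (m.length + t.length) = a.length + (x.length + b.length) := by
    have := congrArg List.length hst
    simpa [List.length_append] using this
  by_cases h1 : s.length + m.length ≤ a.length + (x.length - 1)
  · -- m is a factor of a ++ x.take (ℓ-1)
    left
    have hp1 : s ++ m <+: a ++ x ++ b := ⟨t, by rw [← hst, List.append_assoc]⟩
    have hp2 : a ++ x.take (x.length - 1) <+: a ++ x ++ b := by
      refine ⟨x.drop (x.length - 1) ++ b, ?_⟩
      rw [List.append_assoc a, ← List.append_assoc (x.take (x.length - 1)),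
        List.take_append_drop, ← List.append_assoc]
    have hpre : s ++ m <+: a ++ x.take (x.length - 1) := by
      refine List.prefix_of_prefix_length_le hp1 hp2 ?_
      rw [List.length_append, List.length_append, List.length_take_of_le (by omega)]
      omega
    obtain ⟨r, hr⟩ := hpre
    rw [List.append_assoc] at hr
    rw [← hr]
    have := synset_ideal δ s m r hmS
    rwa [List.append_assoc] at this
  · by_cases h2 : a.length + 1 ≤ s.length
    · -- m is a factor of x.drop 1 ++ b
      right
      have hs1 : m ++ t <:+ a ++ x ++ b := ⟨s, by rw [← hst, List.append_assoc]⟩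
      have hs2 : x.drop 1 ++ b <:+ a ++ x ++ b := by
        refine ⟨a ++ x.take 1, ?_⟩
        rw [List.append_assoc a, ← List.append_assoc (x.take 1),
          List.take_append_drop, ← List.append_assoc]
      have hsuf : m ++ t <:+ x.drop 1 ++ b := by
        refine List.suffix_of_suffix_length_le hs1 hs2 ?_
        rw [List.length_append, List.length_append, List.length_drop]
        omega
      obtain ⟨r, hr⟩ := hsuf
      rw [← hr, ← List.append_assoc]
      exact synset_ideal δ r m t hmS
    · -- impossible: x would be a factor of m
      exfalso
      apply hmiss m hm
      have hs : s.length ≤ a.length := by omega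
      have hK : (a.drop s.length).length + x.length ≤ m.length := by
        rw [List.length_drop]
        omega
      have hp1 : a.drop s.length ++ x <+: m ++ t := by
        have hdrop := congrArg (List.drop s.length) hst
        rw [List.append_assoc, List.drop_left] at hdrop
        rw [List.append_assoc, List.drop_append,
          Nat.sub_eq_zero_of_le hs, List.drop_zero] at hdrop
        exact ⟨b, by rw [List.append_assoc, hdrop]⟩
      have hp2 : m <+: m ++ t := List.prefix_append m t
      have hpre : a.drop s.length ++ x <+: m := by
        refine List.prefix_of_prefix_length_le hp1 hp2 ?_
        rw [List.length_append]
        exact hK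
      exact ((List.suffix_append (a.drop s.length) x).isInfix).trans hpre.isInfix

/-- There is a short word merging two given distinct states. -/
lemma merge_short [Fintype Q] (δ : Q → A → Q) (hsync : (SynSet δ).Nonempty)
    {p q : Q} (hpq : p ≠ q) :
    ∃ w : List A, actW δ p w = actW δ q w ∧
      2 * w.length ≤ Fintype.card Q * (Fintype.card Q - 1) := by
  classical
  have hex : ∃ k : ℕ, ∃ w : List A, w.length = k ∧ actW δ p w = actW δ q w := by
    obtain ⟨w, q₀, hw⟩ := hsync
    exact ⟨w.length, w, rfl, (hw p).trans (hw q).symm⟩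
  obtain ⟨w, hw, hmin⟩ : ∃ w : List A, actW δ p w = actW δ q w ∧
      ∀ u : List A, actW δ p u = actW δ q u → w.length ≤ u.length := by
    haveI : DecidablePred (fun k : ℕ => ∃ w : List A, w.length = k ∧ actW δ p w = actW δ q w) :=
      Classical.decPred _
    obtain ⟨w, hwl, hwm⟩ := Nat.find_spec hex
    exact ⟨w, hwm, fun u hu => hwl ▸ Nat.find_min' hex ⟨u, rfl, hu⟩⟩
  refine ⟨w, hw, ?_⟩
  set N := Fintype.card Q with hN
  -- distinctness of intermediate pairs
  have hne : ∀ i, i < w.length → actW δ p (w.take i) ≠ actW δ q (w.take i) := by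
    intro i hi heq
    have := hmin _ heq
    rw [List.length_take_of_le (le_of_lt hi)] at this
    omega
  have key : ∀ i j, i < j → j < w.length →
      ({actW δ p (w.take i), actW δ q (w.take i)} : Finset Q) =
      ({actW δ p (w.take j), actW δ q (w.take j)} : Finset Q) → False := by
    intro i j hij hj hpair
    have hmem1 : actW δ p (w.take i) ∈
        ({actW δ p (w.take j), actW δ q (w.take j)} : Finset Q) := by
      rw [← hpair]; exact Finset.mem_insert_self _ _
    have hmem2 : actW δ q (w.take i) ∈
        ({actW δ p (w.take j), actW δ q (w.take j)} : Finset Q) := by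
      rw [← hpair]; exact Finset.mem_insert_of_mem (Finset.mem_singleton_self _)
    simp only [Finset.mem_insert, Finset.mem_singleton] at hmem1 hmem2
    have hnei := hne i (lt_trans hij hj)
    have hnej := hne j hj
    -- build the shorter merging word
    have hsplit : ∀ r : Q, actW δ r w = actW δ (actW δ r (w.take j)) (w.drop j) := by
      intro r
      conv_lhs => rw [← List.take_append_drop j w]
      rw [actW_append]
    have hmerge : actW δ p (w.take i ++ w.drop j) = actW δ q (w.take i ++ w.drop j) := by
      rw [actW_append, actW_append]
      rcases hmem1 with h1 | h1 <;> rcases hmem2 with h2 | h2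
      · exact absurd (h1.trans h2.symm) hnei
      · rw [h1, h2, ← hsplit, ← hsplit]; exact hw
      · rw [h1, h2, ← hsplit, ← hsplit]; exact hw.symm
      · exact absurd (h1.trans h2.symm) hnei
    have := hmin _ hmerge
    rw [List.length_append, List.length_take_of_le (by omega), List.length_drop] at this
    omega
  have hInj : Set.InjOn (fun i => ({actW δ p (w.take i), actW δ q (w.take i)} : Finset Q))
      (Finset.range w.length) := by
    intro i hi j hj hij
    simp only [Finset.coe_range, Set.mem_Iio] at hi hj
    rcases lt_trichotomy i j with h | h | h
    · exact absurd hij (fun hh => key i j h hj hh)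
    · exact h
    · exact absurd hij.symm (fun hh => key j i h hi hh)
  have hmaps : ∀ i ∈ Finset.range w.length,
      ({actW δ p (w.take i), actW δ q (w.take i)} : Finset Q) ∈
        Finset.powersetCard 2 (Finset.univ : Finset Q) := by
    intro i hi
    rw [Finset.mem_range] at hi
    rw [Finset.mem_powersetCard]
    exact ⟨fun y _ => Finset.mem_univ y, Finset.card_pair (hne i hi)⟩
  have hcard : w.length ≤ N.choose 2 := by
    calc w.length = (Finset.range w.length).card := (Finset.card_range _).symm
      _ ≤ (Finset.powersetCard 2 (Finset.univ : Finset Q)).card :=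
          Finset.card_le_card_of_injOn _ hmaps hInj
      _ = N.choose 2 := by rw [Finset.card_powersetCard, Finset.card_univ]
  have h2 : 2 * N.choose 2 ≤ N * (N - 1) := by
    rw [Nat.choose_two_right]
    have hdvd : 2 ∣ N * (N - 1) := by
      rcases N with _ | m
      · simp
      · simpa [Nat.succ_sub_one, Nat.mul_comm] using (Nat.even_mul_succ_self m).two_dvd
    omega
  omega

/-- Concatenation of merging words interleaved with `x`. -/
def J (x : List A) : List (List A) → List A
  | [] => []
  | v :: vs => v ++ x ++ J x vs

/-- Greedy synchronization: a word of the form `v₁ x v₂ x … vₜ x` resetting `S`. -/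
lemma greedy [Fintype Q] (δ : Q → A → Q) (hsync : (SynSet δ).Nonempty) (x : List A) :
    ∀ (k : ℕ) (S : Finset Q), S.card ≤ k → S.Nonempty →
    ∃ (vs : List (List A)) (q0 : Q),
      (∀ v ∈ vs, 2 * v.length ≤ Fintype.card Q * (Fintype.card Q - 1)) ∧
      (∀ p ∈ S, actW δ p (J x vs) = q0) := by
  classical
  intro k
  induction k with
  | zero =>
    intro S hcard hne
    have := Finset.card_pos.mpr hne
    omega
  | succ k ih =>
    intro S hcard hne
    by_cases h1 : S.card ≤ 1
    · obtain ⟨q0, hq0⟩ := Finset.card_eq_one.mp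
        (le_antisymm h1 (Finset.card_pos.mpr hne))
      refine ⟨[], q0, by simp, ?_⟩
      intro p hp
      rw [hq0, Finset.mem_singleton] at hp
      simp [J, actW, hp]
    · obtain ⟨p, hp, q, hq, hpq⟩ := Finset.one_lt_card.mp (show 1 < S.card by omega)
      obtain ⟨v, hv, hvlen⟩ := merge_short δ hsync hpq
      set S' := S.image (fun r => actW δ (actW δ r v) x) with hS'
      have hsub : S.image (fun r => actW δ r v) ⊆ (S.erase q).image (fun r => actW δ r v) := by
        intro y hy
        rw [Finset.mem_image] at hy ⊢
        obtain ⟨r, hr, rfl⟩ := hy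
        by_cases hrq : r = q
        · exact ⟨p, Finset.mem_erase.mpr ⟨hpq, hp⟩, by rw [hrq, ← hv]⟩
        · exact ⟨r, Finset.mem_erase.mpr ⟨hrq, hr⟩, rfl⟩
      have hcard' : S'.card < S.card := by
        have e1 : S' = (S.image (fun r => actW δ r v)).image (fun r => actW δ r x) := by
          rw [Finset.image_image]
          rfl
        calc S'.card ≤ (S.image (fun r => actW δ r v)).card := by
              rw [e1]; exact Finset.card_image_le
          _ ≤ ((S.erase q).image (fun r => actW δ r v)).card := Finset.card_le_card hsub
          _ ≤ (S.erase q).card := Finset.card_image_le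
          _ = S.card - 1 := Finset.card_erase_of_mem hq
          _ < S.card := by
              have := Finset.card_pos.mpr hne
              omega
      have hne' : S'.Nonempty := hne.image _
      obtain ⟨vs, q0, hvs, hact⟩ := ih S' (by omega) hne'
      refine ⟨v :: vs, q0, ?_, ?_⟩
      · intro u hu
        rcases List.mem_cons.mp hu with rfl | hu
        · exact hvlen
        · exact hvs u hu
      · intro r hr
        have : actW δ r (J x (v :: vs)) = actW δ (actW δ (actW δ r v) x) (J x vs) := by
          show actW δ r (v ++ x ++ J x vs) = _
          rw [actW_append, actW_append]
        rw [this]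
        exact hact _ (Finset.mem_image.mpr ⟨r, hr, rfl⟩)

lemma arith {P R E l v c : ℕ} (h1 : 4 * l ≤ P) (h3 : P + R = 2 * E) (h2 : 2 * v ≤ R)
    (hc : c ≤ l) (hl : 1 ≤ l) : c + v + (l - 1) ≤ E := by omega

end Stmt1Aux

open Stmt1Aux in
/-- Cerny's conjecture holds for a synchronizing automaton with `n`
states whose set of minimal reset words misses a factor of length `ℓ` with
`4ℓ ≤ n² - 3n + 2 = (n-1)(n-2)`. -/
theorem stmt1 {A Q : Type*} [Fintype A] [Fintype Q] [Nonempty Q]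
    (hA : 1 < Fintype.card A)
    (δ : Q → A → Q) (n : ℕ) (hn : Fintype.card Q = n)
    (hsync : (SynSet δ).Nonempty)
    (ℓ : ℕ) (hℓ : 4 * ℓ ≤ (n - 1) * (n - 2))
    (x : List A) (hx : x.length = ℓ)
    (hmiss : ∀ w ∈ MinWords (SynSet δ), ¬ x <:+: w) :
    ∃ u ∈ SynSet δ, u.length ≤ (n - 1) ^ 2 := by
  classical
  subst hn
  set N := Fintype.card Q with hN
  by_cases hx0 : x = []
  · -- the empty word is a factor of every minimal word: contradiction
    exfalso
    obtain ⟨w, hw⟩ := hsync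
    obtain ⟨m, hm, -⟩ := exists_minWord_factor (I := SynSet δ) w.length w le_rfl hw
    exact hmiss m hm (by rw [hx0]; exact ⟨[], m, by simp⟩)
  · have hℓ1 : 1 ≤ ℓ := hx ▸ List.length_pos_iff.mpr hx0
    -- key product identity
    have hprod : (N - 1) * (N - 2) + N * (N - 1) = 2 * ((N - 1) * (N - 1)) := by
      rcases N with _ | m
      · simp
      · rcases m with _ | k
        · simp
        · simp only [Nat.succ_sub_one]
          have : k + 1 + 1 - 2 = k := by omega
          rw [this]
          ring
    have hpow : (N - 1) ^ 2 = (N - 1) * (N - 1) := sq (N - 1)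
    -- greedy construction
    set S : Finset Q := Finset.univ.image (fun p => actW δ p x) with hS
    have hSne : S.Nonempty := Finset.univ_nonempty.image _
    obtain ⟨vs, q0, hvs, hact⟩ := greedy δ hsync x S.card S le_rfl hSne
    have hW : x ++ J x vs ∈ SynSet δ := by
      refine ⟨q0, fun p => ?_⟩
      rw [actW_append]
      exact hact _ (Finset.mem_image.mpr ⟨p, Finset.mem_univ p, rfl⟩)
    -- cutting induction
    have main : ∀ vs : List (List A),
        (∀ v ∈ vs, 2 * v.length ≤ N * (N - 1)) →
        ∀ c : List A, c.length ≤ ℓ → c ++ J x vs ∈ SynSet δ →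
        ∃ u ∈ SynSet δ, u.length ≤ (N - 1) ^ 2 := by
      intro vs
      induction vs with
      | nil =>
        intro _ c hc hcS
        refine ⟨c, by simpa [J] using hcS, ?_⟩
        have h4 : ℓ ≤ (N - 1) * (N - 1) := by
          have h5 : (N - 1) * (N - 2) ≤ (N - 1) * (N - 1) :=
            Nat.mul_le_mul_left _ (by omega)
          omega
        rw [hpow]
        omega
      | cons v vs ih =>
        intro hb c hc hcS
        have hsh : (c ++ v) ++ x ++ J x vs ∈ SynSet δ := by
          have : c ++ J x (v :: vs) = (c ++ v) ++ x ++ J x vs := by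
            show c ++ (v ++ x ++ J x vs) = _
            simp [List.append_assoc]
          rwa [this] at hcS
        rcases cut hx0 hmiss hsh with h | h
        · refine ⟨_, h, ?_⟩
          rw [List.length_append, List.length_append, List.length_take_of_le (by omega), hpow]
          have := hb v (List.mem_cons_self)
          calc c.length + v.length + (x.length - 1) = c.length + v.length + (ℓ - 1) := by
                rw [hx]
            _ ≤ (N - 1) * (N - 1) :=
                arith hℓ hprod this hc hℓ1
        · exact ih (fun u hu => hb u (List.mem_cons_of_mem v hu)) (x.drop 1)
            (by rw [List.length_drop, hx]; omega) h
    exact main vs hvs x (le_of_eq hx) hW
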